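/- For a fan Δ in N_ℝ with M the dual lattice, the ring PExp(Δ) of integral piecewise exponential functions is isomorphic to the inverse limit (over the face poset of Δ) of the rings ℤ[M/(σ^⊥ ∩ M)]: explicitly, PExp(Δ) ≅ { (ρ_σ) ∈ ∏_{σ∈Δ} ℤ[M_σ] : ρ_σ restricts to ρ_τ whenever τ is a face of σ }, where M_σ = M/(σ^⊥ ∩ M). -/

import Mathlib

open scoped BigOperators

def pairing {n : ℕ} (u : Fin n → ℤ) (v : Fin n → ℝ) : ℝ := ∑ i, (u i : ℝ) * v i

lemma pairing_add {n : ℕ} (u u' : Fin n → ℤ) (v : Fin n → ℝ) :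
    pairing (u + u') v = pairing u v + pairing u' v := by
  simp [pairing, add_mul, Finset.sum_add_distrib]

lemma pairing_neg {n : ℕ} (u : Fin n → ℤ) (v : Fin n → ℝ) :
    pairing (-u) v = -pairing u v := by
  simp [pairing, Finset.sum_neg_distrib]

/-- Evaluation of `ℤ[M]` at `v ∈ N_ℝ`, sending `e^u` to `exp⟨u, v⟩`. -/
noncomputable def evalAt {n : ℕ} (v : Fin n → ℝ) :
    AddMonoidAlgebra ℤ (Fin n → ℤ) →+* ℝ :=
  ((AddMonoidAlgebra.lift ℤ ℝ (Fin n → ℤ))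
    { toFun := fun u => Real.exp (pairing (Multiplicative.toAdd u) v)
      map_one' := by simp [pairing]
      map_mul' := by
        intro x y
        simp [pairing_add, Real.exp_add] }).toRingHom

/-- For a function `f` defined on the support `|Δ|`, the condition
`f|_σ ∈ Exp(Span σ)`. -/
def IsExpOnSub {n : ℕ} {supp : Set (Fin n → ℝ)} (s : Set (Fin n → ℝ))
    (f : supp → ℝ) : Prop :=
  ∃ a : AddMonoidAlgebra ℤ (Fin n → ℤ), ∀ v : supp, (v : Fin n → ℝ) ∈ s → f v = evalAt v a

/-- The ring `PExp(Δ)` of integral piecewise exponential functions `|Δ| → ℝ`. -/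
noncomputable def pexpSubring {n : ℕ} {ι : Type} (cones : ι → Set (Fin n → ℝ)) :
    Subring ((⋃ i, cones i : Set (Fin n → ℝ)) → ℝ) where
  carrier := { f | ∀ i, IsExpOnSub (cones i) f }
  one_mem' := fun i => ⟨1, fun v _ => by simp⟩
  mul_mem' := fun {f g} hf hg i => by
    obtain ⟨a, ha⟩ := hf i
    obtain ⟨b, hb⟩ := hg i
    exact ⟨a * b, fun v hv => by simp [ha v hv, hb v hv]⟩
  add_mem' := fun {f g} hf hg i => by
    obtain ⟨a, ha⟩ := hf i
    obtain ⟨b, hb⟩ := hg i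
    exact ⟨a + b, fun v hv => by simp [ha v hv, hb v hv]⟩
  zero_mem' := fun i => ⟨0, fun v _ => by simp⟩
  neg_mem' := fun {f} hf i => by
    obtain ⟨a, ha⟩ := hf i
    exact ⟨-a, fun v hv => by simp [ha v hv]⟩

/-- `σ^⊥ ∩ M`: the subgroup of lattice functionals vanishing on `σ`. -/
def perpLattice {n : ℕ} (σ : Set (Fin n → ℝ)) : AddSubgroup (Fin n → ℤ) where
  carrier := { u | ∀ v ∈ σ, pairing u v = 0 }
  zero_mem' := fun v _ => by simp [pairing]
  add_mem' := fun {u u'} hu hu' v hv => by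
    simp [pairing_add, hu v hv, hu' v hv]
  neg_mem' := fun {u} hu v hv => by simp [pairing_neg, hu v hv]

/-- The quotient lattice `M_σ = M/(σ^⊥ ∩ M)`. -/
abbrev Mq {n : ℕ} (σ : Set (Fin n → ℝ)) : Type := (Fin n → ℤ) ⧸ perpLattice σ

/-- The pairing with a point `v ∈ σ` descends to `M_σ`. -/
noncomputable def pairingQuot {n : ℕ} (σ : Set (Fin n → ℝ)) (v : Fin n → ℝ)
    (hv : v ∈ σ) : Mq σ →+ ℝ :=
  QuotientAddGroup.lift (perpLattice σ)
    { toFun := fun u => pairing u v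
      map_zero' := by simp [pairing]
      map_add' := fun u u' => pairing_add u u' v }
    (fun u hu => hu v hv)

/-- Evaluation of `ℤ[M_σ]` at a point `v ∈ σ`, as a ring homomorphism. -/
noncomputable def evalQAt {n : ℕ} (σ : Set (Fin n → ℝ)) (v : Fin n → ℝ)
    (hv : v ∈ σ) : AddMonoidAlgebra ℤ (Mq σ) →+* ℝ :=
  ((AddMonoidAlgebra.lift ℤ ℝ (Mq σ))
    { toFun := fun m => Real.exp (pairingQuot σ v hv (Multiplicative.toAdd m))
      map_one' := by simp
      map_mul' := by
        intro x y
        simp [Real.exp_add] }).toRingHom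

/-- For `τ ⊆ σ` (e.g. `τ` a face of `σ`), the natural surjection `M_σ → M_τ`
induces a restriction map `ℤ[M_σ] → ℤ[M_τ]`. -/
noncomputable def restrictq {n : ℕ} {τ σ : Set (Fin n → ℝ)} (h : τ ⊆ σ) :
    AddMonoidAlgebra ℤ (Mq σ) →+* AddMonoidAlgebra ℤ (Mq τ) :=
  AddMonoidAlgebra.mapDomainRingHom ℤ
    (QuotientAddGroup.map (perpLattice σ) (perpLattice τ) (AddMonoidHom.id _)
      (fun u hu v hv => hu v (h hv)))

/-- The subring of `∏_{σ ∈ Δ} ℤ[M_σ]` consisting of compatible tuples: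
`ρ_σ` restricts to `ρ_τ` whenever `τ ⪯ σ`. -/
noncomputable def compatSubring {n : ℕ} {ι : Type} (cones : ι → Set (Fin n → ℝ)) :
    Subring (Π i, AddMonoidAlgebra ℤ (Mq (cones i))) where
  carrier := { ρ | ∀ i j (h : cones j ⊆ cones i), restrictq h (ρ i) = ρ j }
  one_mem' := fun i j h => by simp
  mul_mem' := fun {ρ ρ'} hρ hρ' i j h => by
    simp [map_mul, hρ i j h, hρ' i j h]
  add_mem' := fun {ρ ρ'} hρ hρ' i j h => by
    simp [map_add, hρ i j h, hρ' i j h]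
  zero_mem' := fun i j h => by simp
  neg_mem' := fun {ρ} hρ i j h => by simp [map_neg, hρ i j h]

/-! ### Auxiliary lemmas -/

lemma pairing_zero_right {n : ℕ} (u : Fin n → ℤ) : pairing u (0 : Fin n → ℝ) = 0 := by
  simp [pairing]

lemma pairing_add_right {n : ℕ} (u : Fin n → ℤ) (v w : Fin n → ℝ) :
    pairing u (v + w) = pairing u v + pairing u w := by
  simp [pairing, mul_add, Finset.sum_add_distrib]

lemma pairingQuot_mk {n : ℕ} (σ : Set (Fin n → ℝ)) (v : Fin n → ℝ) (hv : v ∈ σ)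
    (u : Fin n → ℤ) :
    pairingQuot σ v hv (QuotientAddGroup.mk u) = pairing u v := rfl

lemma pairingQuot_zero {n : ℕ} (σ : Set (Fin n → ℝ)) (h : (0 : Fin n → ℝ) ∈ σ) (m : Mq σ) :
    pairingQuot σ 0 h m = 0 := by
  induction m using QuotientAddGroup.induction_on with
  | H u => rw [pairingQuot_mk]; exact pairing_zero_right u

lemma pairingQuot_add_right {n : ℕ} (σ : Set (Fin n → ℝ)) (v w : Fin n → ℝ)
    (hv : v ∈ σ) (hw : w ∈ σ) (hvw : v + w ∈ σ) (m : Mq σ) :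
    pairingQuot σ (v + w) hvw m = pairingQuot σ v hv m + pairingQuot σ w hw m := by
  induction m using QuotientAddGroup.induction_on with
  | H u => simp only [pairingQuot_mk]; exact pairing_add_right u v w

lemma evalQAt_apply {n : ℕ} (σ : Set (Fin n → ℝ)) (v : Fin n → ℝ) (hv : v ∈ σ)
    (a : AddMonoidAlgebra ℤ (Mq σ)) :
    evalQAt σ v hv a = a.coeff.sum fun m c => c • Real.exp (pairingQuot σ v hv m) := by
  simp [evalQAt, AddMonoidAlgebra.lift_apply]

lemma evalQAt_single {n : ℕ} (σ : Set (Fin n → ℝ)) (v : Fin n → ℝ) (hv : v ∈ σ)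
    (m : Mq σ) (c : ℤ) :
    evalQAt σ v hv (AddMonoidAlgebra.single m c) = c • Real.exp (pairingQuot σ v hv m) := by
  simp [evalQAt]

lemma evalAt_single {n : ℕ} (v : Fin n → ℝ) (u : Fin n → ℤ) (c : ℤ) :
    evalAt v (AddMonoidAlgebra.single u c) = c • Real.exp (pairing u v) := by
  simp [evalAt]

/-- The cone condition we need: contains `0` and closed under addition. -/
def IsConeLike {n : ℕ} (σ : Set (Fin n → ℝ)) : Prop :=
  (0 : Fin n → ℝ) ∈ σ ∧ ∀ v ∈ σ, ∀ w ∈ σ, v + w ∈ σ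

lemma isConeLike_of_rep {n : ℕ} (S : Finset (Fin n → ℤ)) :
    IsConeLike { v : Fin n → ℝ | ∃ c : (Fin n → ℤ) → ℝ, (∀ g, 0 ≤ c g) ∧
      v = ∑ g ∈ S, c g • (fun k => (g k : ℝ)) } := by
  constructor
  · exact ⟨fun _ => 0, fun g => le_refl 0, by simp⟩
  · rintro v ⟨c, hc, rfl⟩ w ⟨c', hc', rfl⟩
    refine ⟨c + c', fun g => add_nonneg (hc g) (hc' g), ?_⟩
    simp [add_smul, Finset.sum_add_distrib]

/-- A cone as an additive submonoid of `ℝⁿ`. -/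
def coneMonoid {n : ℕ} (σ : Set (Fin n → ℝ)) (hc : IsConeLike σ) :
    AddSubmonoid (Fin n → ℝ) where
  carrier := σ
  zero_mem' := hc.1
  add_mem' := fun hv hw => hc.2 _ hv _ hw

/-- The character of `ℝⁿ` associated to `m ∈ M_σ`, as a monoid homomorphism on the cone. -/
noncomputable def chi {n : ℕ} (σ : Set (Fin n → ℝ)) (hc : IsConeLike σ) (m : Mq σ) :
    Multiplicative (coneMonoid σ hc) →* ℝ where
  toFun g := Real.exp (pairingQuot σ ((Multiplicative.toAdd g : coneMonoid σ hc) : Fin n → ℝ)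
      (Multiplicative.toAdd g).2 m)
  map_one' := by
    show Real.exp (pairingQuot σ (0 : Fin n → ℝ) _ m) = 1
    exact (congrArg Real.exp (pairingQuot_zero σ _ m)).trans Real.exp_zero
  map_mul' := fun x y => by
    show Real.exp (pairingQuot σ ((Multiplicative.toAdd x : coneMonoid σ hc) +
        (Multiplicative.toAdd y : coneMonoid σ hc) : Fin n → ℝ) _ m) = _
    exact (congrArg Real.exp (pairingQuot_add_right σ _ _ (Multiplicative.toAdd x).2
      (Multiplicative.toAdd y).2 _ m)).trans (Real.exp_add _ _)

lemma chi_injective {n : ℕ} (σ : Set (Fin n → ℝ)) (hc : IsConeLike σ) :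
    Function.Injective (chi σ hc) := by
  intro m m' h
  induction m using QuotientAddGroup.induction_on with
  | H u =>
    induction m' using QuotientAddGroup.induction_on with
    | H u' =>
      rw [QuotientAddGroup.eq]
      intro v hv
      have h1 : Real.exp (pairing u v) = Real.exp (pairing u' v) := by
        have := DFunLike.congr_fun h (Multiplicative.ofAdd (⟨v, hv⟩ : coneMonoid σ hc))
        simpa [chi, pairingQuot_mk] using this
      have h2 : pairing u v = pairing u' v := Real.exp_injective h1
      rw [pairing_add, pairing_neg, h2]
      ring

lemma evalQ_eq_zero {n : ℕ} (σ : Set (Fin n → ℝ)) (hc : IsConeLike σ)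
    (a : AddMonoidAlgebra ℤ (Mq σ)) (h : ∀ v (hv : v ∈ σ), evalQAt σ v hv a = 0) :
    a = 0 := by
  have li : LinearIndependent ℝ
      (fun m : Mq σ => ((chi σ hc m) : Multiplicative (coneMonoid σ hc) → ℝ)) :=
    (linearIndependent_monoidHom _ ℝ).comp (chi σ hc) (chi_injective σ hc)
  set l : Mq σ →₀ ℝ := Finsupp.mapRange (Int.cast : ℤ → ℝ) (by simp) a.coeff with hl
  have hl0 : Finsupp.linearCombination ℝ
      (fun m => ((chi σ hc m) : Multiplicative (coneMonoid σ hc) → ℝ)) l = 0 := by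
    rw [Finsupp.linearCombination_apply]
    funext g
    rw [Finsupp.sum_apply']
    have : (l.sum fun m c => (c • ⇑(chi σ hc m)) g) =
        l.sum fun m c => c * Real.exp (pairingQuot σ _ (Multiplicative.toAdd g).2 m) := by
      apply Finsupp.sum_congr
      intro m _
      simp [chi]
    rw [this, hl, Finsupp.sum_mapRange_index (by simp)]
    have := h ((Multiplicative.toAdd g : coneMonoid σ hc) : Fin n → ℝ) (Multiplicative.toAdd g).2
    replace this := (evalQAt_apply σ _ (Multiplicative.toAdd g).2 a).symm.trans this
    simpa [zsmul_eq_mul] using this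
  have hl' : l = 0 := linearIndependent_iff.1 li l hl0
  ext m
  have : ((a.coeff m : ℤ) : ℝ) = 0 := by
    have := congrArg (fun f : Mq σ →₀ ℝ => f m) hl'
    simpa [hl] using this
  simpa using (by exact_mod_cast this : a.coeff m = 0)

lemma evalQ_inj {n : ℕ} (σ : Set (Fin n → ℝ)) (hc : IsConeLike σ)
    (a b : AddMonoidAlgebra ℤ (Mq σ))
    (h : ∀ v (hv : v ∈ σ), evalQAt σ v hv a = evalQAt σ v hv b) : a = b := by
  have := evalQ_eq_zero σ hc (a - b) (fun v hv => by rw [map_sub, h v hv, sub_self])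
  rw [sub_eq_zero] at this; exact this

lemma pairingQuot_map {n : ℕ} {τ σ : Set (Fin n → ℝ)} (h : τ ⊆ σ) (v : Fin n → ℝ)
    (hv : v ∈ τ) (m : Mq σ) :
    pairingQuot τ v hv (QuotientAddGroup.map (perpLattice σ) (perpLattice τ)
      (AddMonoidHom.id _) (fun u hu w hw => hu w (h hw)) m) = pairingQuot σ v (h hv) m := by
  induction m using QuotientAddGroup.induction_on with
  | H u => rfl

lemma evalQAt_restrictq {n : ℕ} {τ σ : Set (Fin n → ℝ)} (h : τ ⊆ σ) (v : Fin n → ℝ)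
    (hv : v ∈ τ) (a : AddMonoidAlgebra ℤ (Mq σ)) :
    evalQAt τ v hv (restrictq h a) = evalQAt σ v (h hv) a := by
  have : (evalQAt τ v hv).comp (restrictq h) = evalQAt σ v (h hv) := by
    apply AddMonoidAlgebra.ringHom_ext
    · intro b
      simp [restrictq, evalQAt_single, AddMonoidAlgebra.mapDomainRingHom_apply,
        Finsupp.mapDomain_single]
    · intro m
      simp [restrictq, evalQAt_single, AddMonoidAlgebra.mapDomainRingHom_apply,
        Finsupp.mapDomain_single, pairingQuot_map h v hv m]
  exact RingHom.congr_fun this a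

lemma evalQAt_mapDomain {n : ℕ} (σ : Set (Fin n → ℝ)) (v : Fin n → ℝ) (hv : v ∈ σ)
    (a : AddMonoidAlgebra ℤ (Fin n → ℤ)) :
    evalQAt σ v hv (AddMonoidAlgebra.mapDomainRingHom ℤ
      (QuotientAddGroup.mk' (perpLattice σ)) a) = evalAt v a := by
  have : (evalQAt σ v hv).comp (AddMonoidAlgebra.mapDomainRingHom ℤ
      (QuotientAddGroup.mk' (perpLattice σ))) = evalAt v := by
    apply AddMonoidAlgebra.ringHom_ext
    · intro b
      simp [evalQAt_single, evalAt_single, AddMonoidAlgebra.mapDomainRingHom_apply,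
        Finsupp.mapDomain_single, pairing]
    · intro u
      have h1 : (AddMonoidAlgebra.mapDomainRingHom ℤ (QuotientAddGroup.mk' (perpLattice σ)))
          (AddMonoidAlgebra.single u (1:ℤ)) = AddMonoidAlgebra.single (QuotientAddGroup.mk u) 1 := by
        show AddMonoidAlgebra.mapDomain _ (AddMonoidAlgebra.single u (1:ℤ)) = _
        rw [AddMonoidAlgebra.mapDomain_single]; rfl
      simp only [RingHom.coe_comp, Function.comp_apply, h1, evalQAt_single, evalAt_single,
        pairingQuot_mk]
  exact RingHom.congr_fun this a

lemma mapDomainQ_surjective {n : ℕ} (σ : Set (Fin n → ℝ)) :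
    Function.Surjective (AddMonoidAlgebra.mapDomainRingHom ℤ
      (QuotientAddGroup.mk' (perpLattice σ)) :
        AddMonoidAlgebra ℤ (Fin n → ℤ) → AddMonoidAlgebra ℤ (Mq σ)) := by
  intro a
  induction a using AddMonoidAlgebra.induction with
  | zero => exact ⟨0, map_zero _⟩
  | single_add m c rest _ _ ih =>
    obtain ⟨b, hb⟩ := ih
    obtain ⟨u, hu⟩ := QuotientAddGroup.mk'_surjective (perpLattice σ) m
    refine ⟨AddMonoidAlgebra.single u c + b, ?_⟩
    rw [map_add, hb]
    congr 1
    show AddMonoidAlgebra.mapDomain _ (AddMonoidAlgebra.single u c) = _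
    rw [AddMonoidAlgebra.mapDomain_single, hu]

/-- for a fan `Δ`, the ring `PExp(Δ)` of integral piecewise
exponential functions is isomorphic to the inverse limit over the face poset of
`Δ` of the group rings `ℤ[M_σ]`, i.e. to the ring of compatible tuples
`(ρ_σ) ∈ ∏_{σ ∈ Δ} ℤ[M_σ]`; the isomorphism matches `ρ_σ` with `f|_σ` (expressed
here by compatibility with evaluation at each point of each cone). -/
theorem pexp_iso_inverse_limit {n : ℕ} {ι : Type} [Fintype ι]
    (cones : ι → Set (Fin n → ℝ))
    (hfan : ∀ i, ∃ S : Finset (Fin n → ℤ), cones i =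
      { v | ∃ c : (Fin n → ℤ) → ℝ, (∀ g, 0 ≤ c g) ∧
            v = ∑ g ∈ S, c g • (fun k => (g k : ℝ)) })
    (hint : ∀ i j, ∃ k, cones i ∩ cones j = cones k) :
    ∃ e : pexpSubring cones ≃+* compatSubring cones,
      ∀ (f : pexpSubring cones) (i : ι) (v : (⋃ i, cones i : Set (Fin n → ℝ)))
        (hv : (v : Fin n → ℝ) ∈ cones i),
        evalQAt (cones i) (v : Fin n → ℝ) hv
            ((e f : Π i, AddMonoidAlgebra ℤ (Mq (cones i))) i)
          = (f : (⋃ i, cones i : Set (Fin n → ℝ)) → ℝ) v := by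
  classical
  have hcone : ∀ i, IsConeLike (cones i) := fun i => by
    obtain ⟨S, hS⟩ := hfan i
    rw [hS]; exact isConeLike_of_rep S
  have hinj : ∀ i (a b : AddMonoidAlgebra ℤ (Mq (cones i))),
      (∀ v (hv : v ∈ cones i), evalQAt (cones i) v hv a = evalQAt (cones i) v hv b) →
      a = b := fun i => evalQ_inj (cones i) (hcone i)
  have uniq : ∀ ρ ρ' : compatSubring cones,
      (∀ i v (hv : v ∈ cones i),
        evalQAt (cones i) v hv (ρ.1 i) = evalQAt (cones i) v hv (ρ'.1 i)) → ρ = ρ' :=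
    fun ρ ρ' h => Subtype.ext (funext fun i => hinj i _ _ (h i))
  -- existence of a compatible tuple representing a piecewise exponential function
  have key : ∀ f : pexpSubring cones, ∃ ρ : compatSubring cones,
      ∀ (i : ι) (v : (⋃ i, cones i : Set (Fin n → ℝ))) (hv : (v : Fin n → ℝ) ∈ cones i),
        evalQAt (cones i) (v : Fin n → ℝ) hv (ρ.1 i) = (f : _ → ℝ) v := by
    intro f
    have hf : ∀ i, IsExpOnSub (cones i) (f : (⋃ i, cones i : Set (Fin n → ℝ)) → ℝ) := f.2
    choose a ha using hf
    refine ⟨⟨fun i => AddMonoidAlgebra.mapDomainRingHom ℤ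
        (QuotientAddGroup.mk' (perpLattice (cones i))) (a i), ?_⟩, ?_⟩
    · intro i j hji
      apply hinj j
      intro v hv
      rw [evalQAt_restrictq hji v hv, evalQAt_mapDomain, evalQAt_mapDomain]
      have hvU : v ∈ ⋃ i, cones i := Set.mem_iUnion.2 ⟨j, hv⟩
      rw [← ha i ⟨v, hvU⟩ (hji hv), ← ha j ⟨v, hvU⟩ hv]
    · intro i v hv
      show evalQAt (cones i) (v : Fin n → ℝ) hv
        (AddMonoidAlgebra.mapDomainRingHom ℤ
          (QuotientAddGroup.mk' (perpLattice (cones i))) (a i)) = _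
      rw [evalQAt_mapDomain]
      exact (ha i v hv).symm
  set Φfun : pexpSubring cones → compatSubring cones := fun f => (key f).choose with hΦfun
  have hΦ : ∀ (f : pexpSubring cones) (i : ι) (v : (⋃ i, cones i : Set (Fin n → ℝ)))
      (hv : (v : Fin n → ℝ) ∈ cones i),
      evalQAt (cones i) (v : Fin n → ℝ) hv ((Φfun f).1 i) = (f : _ → ℝ) v :=
    fun f => (key f).choose_spec
  have hΦ' : ∀ (f : pexpSubring cones) (i : ι) (v : Fin n → ℝ) (hv : v ∈ cones i),
      evalQAt (cones i) v hv ((Φfun f).1 i)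
        = (f : (⋃ i, cones i : Set (Fin n → ℝ)) → ℝ)
            ⟨v, Set.mem_iUnion.2 ⟨i, hv⟩⟩ :=
    fun f i v hv => hΦ f i ⟨v, Set.mem_iUnion.2 ⟨i, hv⟩⟩ hv
  let Φ : pexpSubring cones →+* compatSubring cones :=
    { toFun := Φfun
      map_one' := uniq _ _ (fun i v hv => by
        rw [hΦ' 1 i v hv]
        have h1 : ((1 : compatSubring cones) : Π i, AddMonoidAlgebra ℤ (Mq (cones i))) i
            = 1 := rfl
        rw [h1, map_one]; rfl)
      map_mul' := fun f g => uniq _ _ (fun i v hv => by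
        rw [hΦ' (f * g) i v hv]
        have h1 : ((Φfun f * Φfun g : compatSubring cones) :
            Π i, AddMonoidAlgebra ℤ (Mq (cones i))) i = (Φfun f).1 i * (Φfun g).1 i := rfl
        rw [h1, map_mul, hΦ' f i v hv, hΦ' g i v hv]; rfl)
      map_zero' := uniq _ _ (fun i v hv => by
        rw [hΦ' 0 i v hv]
        have h1 : ((0 : compatSubring cones) : Π i, AddMonoidAlgebra ℤ (Mq (cones i))) i
            = 0 := rfl
        rw [h1, map_zero]; rfl)
      map_add' := fun f g => uniq _ _ (fun i v hv => by
        rw [hΦ' (f + g) i v hv]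
        have h1 : ((Φfun f + Φfun g : compatSubring cones) :
            Π i, AddMonoidAlgebra ℤ (Mq (cones i))) i = (Φfun f).1 i + (Φfun g).1 i := rfl
        rw [h1, map_add, hΦ' f i v hv, hΦ' g i v hv]; rfl) }
  have hbij : Function.Bijective Φ := by
    constructor
    · intro f g h
      apply Subtype.ext; funext v
      obtain ⟨i, hv⟩ := Set.mem_iUnion.1 v.2
      have hΦfg : Φfun f = Φfun g := h
      calc (f : _ → ℝ) v = evalQAt (cones i) (v : Fin n → ℝ) hv ((Φfun f).1 i) :=
            (hΦ f i v hv).symm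
        _ = evalQAt (cones i) (v : Fin n → ℝ) hv ((Φfun g).1 i) := by rw [hΦfg]
        _ = (g : _ → ℝ) v := hΦ g i v hv
    · intro ρ
      have hex : ∀ v : (⋃ i, cones i : Set (Fin n → ℝ)),
          ∃ i, (v : Fin n → ℝ) ∈ cones i := fun v => Set.mem_iUnion.1 v.2
      choose idx hidx using hex
      set g : (⋃ i, cones i : Set (Fin n → ℝ)) → ℝ :=
        fun v => evalQAt (cones (idx v)) (v : Fin n → ℝ) (hidx v) (ρ.1 (idx v)) with hg
      have wd : ∀ (v : (⋃ i, cones i : Set (Fin n → ℝ))) (i : ι)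
          (hv : (v : Fin n → ℝ) ∈ cones i),
          evalQAt (cones i) (v : Fin n → ℝ) hv (ρ.1 i) = g v := by
        intro v i hv
        obtain ⟨k, hk⟩ := hint i (idx v)
        have hvk : (v : Fin n → ℝ) ∈ cones k := hk ▸ ⟨hv, hidx v⟩
        have h1 : cones k ⊆ cones i := hk ▸ Set.inter_subset_left
        have h2 : cones k ⊆ cones (idx v) := hk ▸ Set.inter_subset_right
        have e1 := evalQAt_restrictq h1 (v : Fin n → ℝ) hvk (ρ.1 i)
        have e2 := evalQAt_restrictq h2 (v : Fin n → ℝ) hvk (ρ.1 (idx v))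
        rw [ρ.2 i k h1] at e1
        rw [ρ.2 (idx v) k h2] at e2
        exact e1.symm.trans e2
      have hgmem : g ∈ pexpSubring cones := by
        intro i
        obtain ⟨b, hb⟩ := mapDomainQ_surjective (cones i) (ρ.1 i)
        refine ⟨b, fun v hv => ?_⟩
        rw [← wd v i hv, ← hb, evalQAt_mapDomain]
      refine ⟨⟨g, hgmem⟩, ?_⟩
      show Φfun ⟨g, hgmem⟩ = ρ
      apply uniq
      intro i v hv
      rw [hΦ' ⟨g, hgmem⟩ i v hv]
      exact (wd ⟨v, Set.mem_iUnion.2 ⟨i, hv⟩⟩ i hv).symm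
  exact ⟨RingEquiv.ofBijective Φ hbij, fun f i v hv => hΦ f i v hv⟩
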